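/- arXiv:1602.08587 — 2 statements merged into one kernel-verified Lean document; each statement's English description precedes it below -/
import Mathlib

section
/- (Lemma 6.7 of the paper: properties of the invariants l^{(s)}_i and k^{(s)}_i.) Suppose m'+d > r and let p ∈ X_d(m,m'), with l^{(s)}_i and k^{(s)}_i as in the context. Then: (i) l^{(s)}_i = k^{(s)}_i + s − i − 1 if k^{(s)}_i ∈ {1,…,r}, and l^{(s)}_i = s − i + r if k^{(s)}_i ∈ {0,r̄,…,1̄}. (ii) For 1 ≤ s ≤ m−m' and 1 ≤ i ≤ d−1: if k^{(s)}_i ∈ {1,…,r} then k^{(s)}_i < k^{(s)}_{i+1} and l^{(s)}_i ≤ l^{(s)}_{i+1}; if k^{(s)}_i ∈ {0,r̄,…,1̄} then k^{(s)}_i ≤ k^{(s)}_{i+1}, l^{(s)}_i = l^{(s)}_{i+1} + 1, and k^{(s)}_i = k^{(s)}_{i+1} holds if and only if k^{(s)}_i = k^{(s)}_{i+1} = 0. (iii) For 1 ≤ s ≤ m−m'−1 and 1 ≤ i ≤ d−1: k^{(s)}_i < k^{(s+1)}_{i+1} in the order on J. -/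
/-!
Lemma 6.7 of "Explicit forms of cluster variables on double Bruhat cells of type B".

We encode the totally ordered set `J = {1 < 2 < ⋯ < r < 0 < r̄ < ⋯ < 1̄}` by the
natural numbers `1, …, 2r+1`: a value `v` with `1 ≤ v ≤ r` is the letter `v`,
the value `r+1` is the letter `0`, and a value `v` with `r+2 ≤ v ≤ 2r+1` is the
barred letter `\overline{2r+2-v}`.  The order on `J` is then the usual order on `ℕ`.
-/

namespace Stmt0

/-- A path in `X_d(m,m')` (Definition 5.2 of the paper), in the encoding above.
`a s i` is the entry `a^{(s)}_i` for `0 ≤ s ≤ m`, `1 ≤ i ≤ d`. -/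
structure PathB (r m m' d : ℕ) : Type where
  a : ℕ → ℕ → ℕ
  /-- every entry lies in `J` -/
  mem : ∀ s, s ≤ m → ∀ i, 1 ≤ i → i ≤ d → 1 ≤ a s i ∧ a s i ≤ 2*r+1
  /-- `a^{(s)}_1 < a^{(s)}_2 < ⋯ < a^{(s)}_d` -/
  strictRow : ∀ s, s ≤ m → ∀ i, 1 ≤ i → i < d → a s i < a s (i+1)
  /-- if `a^{(s)}_i ∈ {1,…,r-1}` then `a^{(s+1)}_i ∈ {a^{(s)}_i, a^{(s)}_i + 1}` -/
  stepLow : ∀ s, s < m → ∀ i, 1 ≤ i → i ≤ d → a s i ≤ r - 1 →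
      a (s+1) i = a s i ∨ a (s+1) i = a s i + 1
  /-- if `a^{(s)}_i ∈ {r,0,r̄,…,1̄}` then `a^{(s)}_i ≤ a^{(s+1)}_i ≤ 1̄` -/
  stepHigh : ∀ s, s < m → ∀ i, 1 ≤ i → i ≤ d → r ≤ a s i →
      a s i ≤ a (s+1) i ∧ a (s+1) i ≤ 2*r+1
  /-- `(a^{(0)}_1,…,a^{(0)}_d) = (1,…,d)` -/
  init : ∀ i, 1 ≤ i → i ≤ d → a 0 i = i
  /-- the end point of the path: `(m'+1,…,m'+d)` if `m'+d ≤ r`, and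
  `(m'+1,…,r,\overline{d-r+m'},…,1̄)` if `m'+d > r` -/
  final : ∀ i, 1 ≤ i → i ≤ d → a m i = if m' + i ≤ r then m' + i else 2*r+1 - d + i
  /-- if `a^{(s+1)}_i ∈ {0,r̄,…,1̄}` then `a^{(s+1)}_i ≤ a^{(s)}_{i+1}`, with equality
  only if both equal `0` -/
  barredCond : ∀ s, s < m → ∀ i, 1 ≤ i → i < d → r + 1 ≤ a (s+1) i →
      a (s+1) i ≤ a s (i+1) ∧ (a (s+1) i = a s (i+1) → a (s+1) i = r + 1)

/-- The set whose increasing enumeration is `l^{(1)}_i < ⋯ < l^{(m-m')}_i`. -/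
def S (r m m' d : ℕ) (p : PathB r m m' d) (i : ℕ) : Set ℕ :=
  if i + m' ≤ r then
    {s | s < m ∧ p.a s i = p.a (s+1) i}
  else
    {s | s ≤ m + r - i - m' ∧
      ((p.a s i ≤ r ∧ p.a s i = p.a (s+1) i) ∨ r + 1 ≤ p.a s i)}

/-- `l` is the increasing enumeration `s ↦ l^{(s)}_i` (for `1 ≤ s ≤ m-m'`) of the set
`S r m m' d p i`, for each `1 ≤ i ≤ d`. -/
def IsEnum (r m m' d : ℕ) (p : PathB r m m' d) (l : ℕ → ℕ → ℕ) : Prop :=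
  ∀ i, 1 ≤ i → i ≤ d →
    (∀ s t, 1 ≤ s → s < t → t ≤ m - m' → l s i < l t i) ∧
    (∀ s, 1 ≤ s → s ≤ m - m' → l s i ∈ S r m m' d p i) ∧
    (∀ x ∈ S r m m' d p i, ∃ s, 1 ≤ s ∧ s ≤ m - m' ∧ l s i = x)

section Aux

variable {r m m' d : ℕ}

/-- explicit (decidable-looking) membership predicate for `S`. -/
def inS (r m m' : ℕ) (a : ℕ → ℕ → ℕ) (i u : ℕ) : Prop :=
  if i + m' ≤ r then u < m ∧ a u i = a (u+1) i
  else u ≤ m + r - i - m' ∧ ((a u i ≤ r ∧ a u i = a (u+1) i) ∨ r + 1 ≤ a u i)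

lemma mem_S_iff (p : PathB r m m' d) {i u : ℕ} :
    u ∈ S r m m' d p i ↔ inS r m m' p.a i u := by
  unfold S inS
  by_cases h : i + m' ≤ r <;> simp [h, Set.mem_setOf_eq]

open Classical in
/-- number of elements of `S_i` below `t`. -/
noncomputable def cnt (r m m' : ℕ) (a : ℕ → ℕ → ℕ) (i : ℕ) : ℕ → ℕ
  | 0 => 0
  | t+1 => cnt r m m' a i t + if inS r m m' a i t then 1 else 0

lemma cnt_succ_of_mem {a : ℕ → ℕ → ℕ} {i t : ℕ} (h : inS r m m' a i t) :
    cnt r m m' a i (t+1) = cnt r m m' a i t + 1 := by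
  simp [cnt, h]

lemma cnt_succ_of_not_mem {a : ℕ → ℕ → ℕ} {i t : ℕ} (h : ¬ inS r m m' a i t) :
    cnt r m m' a i (t+1) = cnt r m m' a i t := by
  simp [cnt, h]

lemma cnt_mono {a : ℕ → ℕ → ℕ} {i u v : ℕ} (h : u ≤ v) :
    cnt r m m' a i u ≤ cnt r m m' a i v := by
  induction h with
  | refl => exact le_refl _
  | step h ih =>
      refine ih.trans ?_
      simp [cnt]

lemma cnt_eq_of_no_mem {a : ℕ → ℕ → ℕ} {i u : ℕ} :
    ∀ v, u ≤ v → (∀ w, u ≤ w → w < v → ¬ inS r m m' a i w) →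
    cnt r m m' a i v = cnt r m m' a i u := by
  intro v
  induction v with
  | zero =>
      intro h _
      have : u = 0 := Nat.le_zero.mp h
      simp [this]
  | succ v ih =>
      intro huv h
      rcases Nat.eq_or_lt_of_le huv with he | hlt
      · rw [he]
      · have huv' : u ≤ v := Nat.lt_succ_iff.mp hlt
        rw [cnt_succ_of_not_mem (h v huv' (Nat.lt_succ_self v)),
          ih huv' (fun w hw hw' => h w hw (hw'.trans (Nat.lt_succ_self v)))]

variable (p : PathB r m m' d)

lemma mono_step (hr : 1 ≤ r) {i s : ℕ} (hi1 : 1 ≤ i) (hid : i ≤ d) (hs : s < m) :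
    p.a s i ≤ p.a (s+1) i := by
  by_cases h : p.a s i ≤ r - 1
  · rcases p.stepLow s hs i hi1 hid h with h' | h' <;> omega
  · exact (p.stepHigh s hs i hi1 hid (by omega)).1

lemma step_le (hr : 1 ≤ r) {i s : ℕ} (hi1 : 1 ≤ i) (hid : i ≤ d) (hs : s < m)
    (hnext : p.a (s+1) i ≤ r) : p.a (s+1) i ≤ p.a s i + 1 := by
  by_cases h : p.a s i ≤ r - 1
  · rcases p.stepLow s hs i hi1 hid h with h' | h' <;> omega
  · have := (p.stepHigh s hs i hi1 hid (by omega)).1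
    omega

lemma mono_le (hr : 1 ≤ r) {i : ℕ} (hi1 : 1 ≤ i) (hid : i ≤ d) :
    ∀ {s t : ℕ}, s ≤ t → t ≤ m → p.a s i ≤ p.a t i := by
  intro s t hst htm
  induction t with
  | zero =>
      have : s = 0 := Nat.le_zero.mp hst
      simp [this]
  | succ t ih =>
      rcases Nat.eq_or_lt_of_le hst with he | hlt
      · rw [he]
      · exact (ih (Nat.lt_succ_iff.mp hlt) (by omega)).trans
          (mono_step p hr hi1 hid (by omega))

/-- value formula in the unbarred region. -/
lemma C1 (hr : 2 ≤ r) {i : ℕ} (hi1 : 1 ≤ i) (hid : i ≤ d) :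
    ∀ t, t ≤ m → (i + m' ≤ r ∨ t ≤ m + r - i - m' + 1) → p.a t i ≤ r →
      p.a t i + cnt r m m' p.a i t = i + t := by
  intro t
  induction t with
  | zero =>
      intro _ _ _
      rw [p.init i hi1 hid]
      simp [cnt]
  | succ t ih =>
      intro htm hbound hle
      have htm' : t < m := htm
      have hmono : p.a t i ≤ p.a (t+1) i := mono_step p (by omega) hi1 hid htm'
      have hat : p.a t i ≤ r := le_trans hmono hle
      have hstep : p.a (t+1) i ≤ p.a t i + 1 := step_le p (by omega) hi1 hid htm' hle
      have hih := ih (le_of_lt htm')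
        (hbound.imp id (fun h => by omega)) hat
      by_cases heq : p.a t i = p.a (t+1) i
      · have hmem : inS r m m' p.a i t := by
          unfold inS
          by_cases hreg : i + m' ≤ r
          · rw [if_pos hreg]; exact ⟨htm', heq⟩
          · rw [if_neg hreg]
            exact ⟨by omega, Or.inl ⟨hat, heq⟩⟩
        rw [cnt_succ_of_mem hmem]
        omega
      · have hmem : ¬ inS r m m' p.a i t := by
          unfold inS
          by_cases hreg : i + m' ≤ r
          · rw [if_pos hreg]
            rintro ⟨-, h⟩; exact heq h
          · rw [if_neg hreg]
            rintro ⟨-, h | h⟩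
            · exact heq h.2
            · omega
        rw [cnt_succ_of_not_mem hmem]
        omega

/-- counting formula in the barred region. -/
lemma C2 (hr : 2 ≤ r) (hm'1 : 1 ≤ m') (hm'm : m' ≤ m) (hd : d ≤ r - 1) {i : ℕ} (hi1 : 1 ≤ i) (hid : i ≤ d)
    (hreg : r < i + m') :
    ∀ t, t ≤ m + r - i - m' + 1 → r + 1 ≤ p.a t i →
      cnt r m m' p.a i t + r + 1 = i + t := by
  intro t
  induction t with
  | zero =>
      intro _ h
      rw [p.init i hi1 hid] at h
      omega
  | succ t ih =>
      intro htM h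
      have htm : t < m := by omega
      by_cases hprev : r + 1 ≤ p.a t i
      · have hih := ih (by omega) hprev
        have hmem : inS r m m' p.a i t := by
          unfold inS
          rw [if_neg (by omega)]
          exact ⟨by omega, Or.inr hprev⟩
        rw [cnt_succ_of_mem hmem]
        omega
      · have har : p.a t i = r := by
          by_contra hne
          have hle : p.a t i ≤ r - 1 := by omega
          rcases p.stepLow t htm i hi1 hid hle with h' | h' <;> omega
        have hC1 := C1 p hr hi1 hid t (by omega) (Or.inr (by omega)) (by omega)
        have hmem : ¬ inS r m m' p.a i t := by
          unfold inS
          rw [if_neg (by omega)]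
          rintro ⟨-, h' | h'⟩
          · omega
          · omega
        rw [cnt_succ_of_not_mem hmem]
        omega

variable {l : ℕ → ℕ → ℕ}

/-- the count of `S_i` below the `s`-th element of `S_i` is `s - 1`. -/
lemma cnt_enum (hl : IsEnum r m m' d p l) {i : ℕ} (hi1 : 1 ≤ i) (hid : i ≤ d) :
    ∀ s, 1 ≤ s → s ≤ m - m' → cnt r m m' p.a i (l s i) + 1 = s := by
  obtain ⟨hstrict, hmemS, hsurj⟩ := hl i hi1 hid
  have hle : ∀ t t', 1 ≤ t → t ≤ t' → t' ≤ m - m' → l t i ≤ l t' i := by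
    intro t t' h1 h2 h3
    rcases Nat.eq_or_lt_of_le h2 with he | hlt
    · rw [he]
    · exact le_of_lt (hstrict t t' h1 hlt h3)
  intro s
  induction s with
  | zero => omega
  | succ s ih =>
      intro _ hs2
      rcases Nat.eq_zero_or_pos s with rfl | hs
      · have h0 : cnt r m m' p.a i (l 1 i) = cnt r m m' p.a i 0 := by
          apply cnt_eq_of_no_mem _ (Nat.zero_le _)
          intro w _ hw hmem
          obtain ⟨t, ht1, ht2, ht3⟩ := hsurj w ((mem_S_iff p).mpr hmem)
          have := hle 1 t (le_refl 1) ht1 ht2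
          omega
        rw [h0]
        simp [cnt]
      · have hih := ih hs (by omega)
        have h1 : cnt r m m' p.a i (l (s+1) i) = cnt r m m' p.a i (l s i + 1) := by
          apply cnt_eq_of_no_mem
          · have := hstrict s (s+1) hs (Nat.lt_succ_self s) hs2
            omega
          · intro w hw hw' hmem
            obtain ⟨t, ht1, ht2, ht3⟩ := hsurj w ((mem_S_iff p).mpr hmem)
            rcases le_or_gt t s with h | h
            · have := hle t s ht1 h (by omega)
              omega
            · have := hle (s+1) t (by omega) h ht2
              omega
        have h2 : cnt r m m' p.a i (l s i + 1) = cnt r m m' p.a i (l s i) + 1 :=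
          cnt_succ_of_mem ((mem_S_iff p).mp (hmemS s hs (by omega)))
        omega

/-- basic bounds on an enumeration point. -/
lemma enum_bounds (hl : IsEnum r m m' d p l) {i s : ℕ} (hs1 : 1 ≤ s) (hs2 : s ≤ m - m')
    (hi1 : 1 ≤ i) (hid : i ≤ d) :
    l s i < m ∧ (i + m' ≤ r ∨ l s i ≤ m + r - i - m') := by
  have hmem := (mem_S_iff p).mp ((hl i hi1 hid).2.1 s hs1 hs2)
  unfold inS at hmem
  by_cases hreg : i + m' ≤ r
  · rw [if_pos hreg] at hmem
    exact ⟨hmem.1, Or.inl hreg⟩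
  · rw [if_neg hreg] at hmem
    exact ⟨by omega, Or.inr hmem.1⟩

/-- an enumeration point with unbarred value is a stay. -/
lemma enum_stay (hl : IsEnum r m m' d p l) {i s : ℕ} (hs1 : 1 ≤ s) (hs2 : s ≤ m - m')
    (hi1 : 1 ≤ i) (hid : i ≤ d) (hle : p.a (l s i) i ≤ r) :
    p.a (l s i) i = p.a (l s i + 1) i := by
  have hmem := (mem_S_iff p).mp ((hl i hi1 hid).2.1 s hs1 hs2)
  unfold inS at hmem
  by_cases hreg : i + m' ≤ r
  · rw [if_pos hreg] at hmem
    exact hmem.2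
  · rw [if_neg hreg] at hmem
    rcases hmem.2 with h | h
    · exact h.2
    · omega

/-- formula (i), unbarred case. -/
lemma formula_low (hr : 2 ≤ r) (hl : IsEnum r m m' d p l) {i s : ℕ}
    (hs1 : 1 ≤ s) (hs2 : s ≤ m - m') (hi1 : 1 ≤ i) (hid : i ≤ d)
    (hk : p.a (l s i) i ≤ r) :
    l s i + i + 1 = p.a (l s i) i + s := by
  obtain ⟨hlm, hbound⟩ := enum_bounds p hl hs1 hs2 hi1 hid
  have hC1 := C1 p hr hi1 hid (l s i) (le_of_lt hlm)
    (hbound.imp id (fun h => by omega)) hk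
  have hcnt := cnt_enum p hl hi1 hid s hs1 hs2
  omega

/-- formula (i), barred case; also shows we are in the regime `i + m' > r`. -/
lemma formula_high (hr : 2 ≤ r) (hm'1 : 1 ≤ m') (hm'm : m' ≤ m) (hd : d ≤ r - 1) (hl : IsEnum r m m' d p l) {i s : ℕ}
    (hs1 : 1 ≤ s) (hs2 : s ≤ m - m') (hi1 : 1 ≤ i) (hid : i ≤ d)
    (hk : r + 1 ≤ p.a (l s i) i) :
    l s i + i = s + r ∧ r < i + m' := by
  have hmem := (mem_S_iff p).mp ((hl i hi1 hid).2.1 s hs1 hs2)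
  unfold inS at hmem
  have hreg : ¬ (i + m' ≤ r) := by
    intro hreg
    rw [if_pos hreg] at hmem
    have h1 : p.a (l s i) i ≤ p.a m i :=
      mono_le p (by omega) hi1 hid (le_of_lt hmem.1) (le_refl m)
    rw [p.final i hi1 hid, if_pos (by omega)] at h1
    omega
  rw [if_neg hreg] at hmem
  have hC2 := C2 p hr hm'1 hm'm hd hi1 hid (by omega) (l s i) (by omega) hk
  have hcnt := cnt_enum p hl hi1 hid s hs1 hs2
  exact ⟨by omega, by omega⟩

/-- the key shift: a barred mark in column `i` forces the corresponding mark of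
column `i+1` to sit one step earlier, also barred. -/
lemma barred_shift (hr : 2 ≤ r) (hm'1 : 1 ≤ m') (hm'm : m' ≤ m) (hd : d ≤ r - 1) (hl : IsEnum r m m' d p l) {i s : ℕ}
    (hs1 : 1 ≤ s) (hs2 : s ≤ m - m') (hi1 : 1 ≤ i) (hid : i < d)
    (hk : r + 1 ≤ p.a (l s i) i) :
    l s i = l s (i+1) + 1 ∧ r + 1 ≤ p.a (l s (i+1)) (i+1) := by
  obtain ⟨hfh, hreg⟩ := formula_high p hr hm'1 hm'm hd hl hs1 hs2 hi1 (by omega) hk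
  obtain ⟨hlm, hbound⟩ := enum_bounds p hl hs1 hs2 hi1 (by omega)
  have hLM : l s i ≤ m + r - i - m' := by
    rcases hbound with h | h
    · omega
    · exact h
  have hL1 : 1 ≤ l s i := by omega
  obtain ⟨L', hL'⟩ : ∃ L', l s i = L' + 1 := ⟨l s i - 1, by omega⟩
  have hbc := p.barredCond L' (by omega) i hi1 hid (by rw [← hL']; exact hk)
  have hk' : r + 1 ≤ p.a L' (i+1) := by
    rw [hL'] at hk
    omega
  have hC2 := C2 p hr hm'1 hm'm hd (i := i+1) (by omega) (by omega) (by omega) L' (by omega) hk'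
  have hmem' : inS r m m' p.a (i+1) L' := by
    unfold inS
    rw [if_neg (by omega)]
    exact ⟨by omega, Or.inr hk'⟩
  obtain ⟨t, ht1, ht2, ht3⟩ := (hl (i+1) (by omega) (by omega)).2.2 L'
    ((mem_S_iff p).mpr hmem')
  have hcnt := cnt_enum p hl (i := i+1) (by omega) (by omega) t ht1 ht2
  rw [ht3] at hcnt
  have hts : t = s := by omega
  rw [hts] at ht3
  rw [ht3]
  exact ⟨by omega, hk'⟩

end Aux

/-- Lemma 6.7: properties of the invariants `l^{(s)}_i` and `k^{(s)}_i` of a path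
`p ∈ X_d(m,m')`, in the case `m' + d > r`. -/
theorem lemma_6_7 (r m m' d : ℕ) (hr : 2 ≤ r) (hm'1 : 1 ≤ m') (hm'm : m' ≤ m)
    (hmr : m ≤ r) (hd1 : 1 ≤ d) (hdr : d ≤ r - 1) (hcase : r < m' + d)
    (p : PathB r m m' d) (l : ℕ → ℕ → ℕ) (hl : IsEnum r m m' d p l)
    (k : ℕ → ℕ → ℕ) (hk : ∀ s i, k s i = p.a (l s i) i) :
    -- (i): `l^{(s)}_i = k^{(s)}_i + s - i - 1` if `k^{(s)}_i ∈ {1,…,r}` and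
    --      `l^{(s)}_i = s - i + r` if `k^{(s)}_i ∈ {0,r̄,…,1̄}`
    (∀ s i, 1 ≤ s → s ≤ m - m' → 1 ≤ i → i ≤ d →
      (k s i ≤ r → l s i + i + 1 = k s i + s) ∧
      (r + 1 ≤ k s i → l s i + i = s + r)) ∧
    -- (ii)
    (∀ s i, 1 ≤ s → s ≤ m - m' → 1 ≤ i → i < d →
      (k s i ≤ r → k s i < k s (i+1) ∧ l s i ≤ l s (i+1)) ∧
      (r + 1 ≤ k s i →
        k s i ≤ k s (i+1) ∧ l s i = l s (i+1) + 1 ∧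
        (k s i = k s (i+1) ↔ k s i = r + 1 ∧ k s (i+1) = r + 1))) ∧
    -- (iii): `k^{(s)}_i < k^{(s+1)}_{i+1}`
    (∀ s i, 1 ≤ s → s + 1 ≤ m - m' → 1 ≤ i → i < d →
      k s i < k (s+1) (i+1)) := by
  refine ⟨?_, ?_, ?_⟩
  · -- part (i)
    intro s i hs1 hs2 hi1 hid
    rw [hk]
    constructor
    · intro h
      exact formula_low p hr hl hs1 hs2 hi1 hid h
    · intro h
      exact (formula_high p hr hm'1 hm'm hdr hl hs1 hs2 hi1 hid h).1
  · -- part (ii)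
    intro s i hs1 hs2 hi1 hid
    rw [hk, hk]
    constructor
    · -- unbarred case
      intro hkle
      have F1 := formula_low p hr hl hs1 hs2 hi1 (by omega) hkle
      by_cases hk' : p.a (l s (i+1)) (i+1) ≤ r
      · have F2 := formula_low p hr hl hs1 hs2 (by omega) (by omega) hk'
        have hklt : p.a (l s i) i < p.a (l s (i+1)) (i+1) := by
          by_contra hcon
          push_neg at hcon
          -- k' ≤ k
          have hll' : l s (i+1) + 1 ≤ l s i := by omega
          obtain ⟨hlm, hbound⟩ := enum_bounds p hl hs1 hs2 hi1 (by omega)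
          have hstay' := enum_stay p hl hs1 hs2 (by omega) (by omega) hk'
          have hA : p.a (l s (i+1) + 1) i ≤ r :=
            le_trans (mono_le p (by omega) hi1 (by omega) hll' (by omega)) hkle
          have hC1 := C1 p hr hi1 (by omega) (l s (i+1) + 1) (by omega)
            (hbound.imp id (fun h => by omega)) hA
          have hrow := p.strictRow (l s (i+1) + 1) (by omega) i hi1 hid
          rw [← hstay'] at hrow
          have hcm := cnt_mono (r := r) (m := m) (m' := m') (a := p.a) (i := i) hll'
          have hce := cnt_enum p hl hi1 (by omega) s hs1 hs2
          omega
        exact ⟨hklt, by omega⟩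
      · push_neg at hk'
        have F2 := (formula_high p hr hm'1 hm'm hdr hl (i := i+1) hs1 hs2 (by omega)
          (by omega) hk').1
        exact ⟨by omega, by omega⟩
    · -- barred case
      intro hkh
      obtain ⟨hsh, hk'⟩ := barred_shift p hr hm'1 hm'm hdr hl hs1 hs2 hi1 hid hkh
      obtain ⟨hlm', -⟩ := enum_bounds p hl hs1 hs2 (i := i+1) (by omega) (by omega)
      have hbc := p.barredCond (l s (i+1)) (by omega) i hi1 hid
        (by rw [← hsh]; exact hkh)
      rw [← hsh] at hbc
      refine ⟨hbc.1, hsh, ?_⟩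
      constructor
      · intro heq
        have := hbc.2 heq
        omega
      · intro ⟨h1, h2⟩
        omega
  · -- part (iii)
    intro s i hs1 hs2 hi1 hid
    rw [hk, hk]
    by_cases hkle : p.a (l s i) i ≤ r
    · by_cases hK : p.a (l (s+1) (i+1)) (i+1) ≤ r
      · have F1 := formula_low p hr hl hs1 (by omega) hi1 (by omega) hkle
        have F2 := formula_low p hr hl (s := s+1) (by omega) hs2 (i := i+1)
          (by omega) (by omega) hK
        by_contra hcon
        push_neg at hcon
        -- K ≤ k, so L + 1 ≤ l + 1
        have hLl : l (s+1) (i+1) + 1 ≤ l s i + 1 := by omega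
        obtain ⟨hlm, hbound⟩ := enum_bounds p hl hs1 (by omega) hi1 (by omega)
        have hstay := enum_stay p hl hs1 (by omega) hi1 (by omega) hkle
        have hstay' := enum_stay p hl (s := s+1) (by omega) hs2 (i := i+1)
          (by omega) (by omega) hK
        have hA : p.a (l (s+1) (i+1) + 1) i ≤ r := by
          have := mono_le p (by omega) hi1 (by omega) hLl (by omega)
          omega
        have hC1 := C1 p hr hi1 (by omega) (l (s+1) (i+1) + 1) (by omega)
          (hbound.imp id (fun h => by omega)) hA
        have hrow := p.strictRow (l (s+1) (i+1) + 1) (by omega) i hi1 hid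
        rw [← hstay'] at hrow
        have hcm := cnt_mono (r := r) (m := m) (m' := m') (a := p.a) (i := i) hLl
        have hmem : inS r m m' p.a i (l s i) :=
          (mem_S_iff p).mp ((hl i hi1 (by omega)).2.1 s hs1 (by omega))
        have hsucc := cnt_succ_of_mem hmem
        have hce := cnt_enum p hl hi1 (by omega) s hs1 (by omega)
        omega
      · push_neg at hK
        omega
    · push_neg at hkle
      obtain ⟨hsh, hk'⟩ := barred_shift p hr hm'1 hm'm hdr hl hs1 (by omega) hi1 hid hkle
      have F := (formula_high p hr hm'1 hm'm hdr hl hs1 (by omega) hi1 (by omega) hkle).1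
      have hlt : l s (i+1) < l (s+1) (i+1) :=
        (hl (i+1) (by omega) (by omega)).1 s (s+1) hs1 (Nat.lt_succ_self s) hs2
      by_cases hK : p.a (l (s+1) (i+1)) (i+1) ≤ r
      · have F2 := formula_low p hr hl (s := s+1) (by omega) hs2 (i := i+1)
          (by omega) (by omega) hK
        omega
      · push_neg at hK
        have F2 := (formula_high p hr hm'1 hm'm hdr hl (s := s+1) (by omega) hs2 (i := i+1)
          (by omega) (by omega) hK).1
        have hLl : l (s+1) (i+1) = l s i := by omega
        obtain ⟨hlm, -⟩ := enum_bounds p hl hs1 (by omega) hi1 (by omega)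
        have hrow := p.strictRow (l s i) (by omega) i hi1 hid
        rw [hLl]
        exact hrow

end Stmt0
end

section
/- (Constructive step in the proof of Theorem 5.6: realizability of admissible families.) Suppose m'+d > r. Let (K^{(s)}_i)_{1≤i≤d, 1≤s≤m−m'} be any family of elements of J satisfying: 1 ≤ K^{(s)}_1 ≤ K^{(s)}_2 ≤ ⋯ ≤ K^{(s)}_d ≤ 1̄ in the order on J, with K^{(s)}_i = K^{(s)}_{i+1} only if both equal 0; i ≤ K^{(1)}_i ≤ ⋯ ≤ K^{(m−m')}_i ≤ m'+i for 1 ≤ i ≤ r−m'; i ≤ K^{(1)}_i ≤ ⋯ ≤ K^{(m−m')}_i ≤ 1̄ for r−m'+1 ≤ i ≤ d; and K^{(s)}_i < K^{(s+1)}_{i+1} for all admissible s, i. Then there exists a path p ∈ X_d(m,m') whose invariants satisfy k^{(s)}_i(p) = K^{(s)}_i for all 1 ≤ i ≤ d and 1 ≤ s ≤ m−m'. -/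
/-!
The constructive step in the proof of Theorem 5.6 (type `B_r`, case `d < r`):
every admissible family `(K^{(s)}_i)` is realized by a path in `X_d(m,m')`.

Encoding of `J = {1 < ⋯ < r < 0 < r̄ < ⋯ < 1̄}` by `1, …, 2r+1`: a value
`v ∈ [1,r]` is the letter `v`, the value `r+1` is the letter `0`, and a value
`v ∈ [r+2, 2r+1]` is the barred letter `\overline{2r+2-v}`.
-/

namespace Stmt2

/-- A path in `X_d(m,m')` (Definition 5.2 of the paper), in the encoding above. -/
structure PathB (r m m' d : ℕ) : Type where
  a : ℕ → ℕ → ℕ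
  mem : ∀ s, s ≤ m → ∀ i, 1 ≤ i → i ≤ d → 1 ≤ a s i ∧ a s i ≤ 2*r+1
  strictRow : ∀ s, s ≤ m → ∀ i, 1 ≤ i → i < d → a s i < a s (i+1)
  stepLow : ∀ s, s < m → ∀ i, 1 ≤ i → i ≤ d → a s i ≤ r - 1 →
      a (s+1) i = a s i ∨ a (s+1) i = a s i + 1
  stepHigh : ∀ s, s < m → ∀ i, 1 ≤ i → i ≤ d → r ≤ a s i →
      a s i ≤ a (s+1) i ∧ a (s+1) i ≤ 2*r+1
  init : ∀ i, 1 ≤ i → i ≤ d → a 0 i = i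
  final : ∀ i, 1 ≤ i → i ≤ d → a m i = if m' + i ≤ r then m' + i else 2*r+1 - d + i
  barredCond : ∀ s, s < m → ∀ i, 1 ≤ i → i < d → r + 1 ≤ a (s+1) i →
      a (s+1) i ≤ a s (i+1) ∧ (a (s+1) i = a s (i+1) → a (s+1) i = r + 1)

/-- The set whose increasing enumeration is `l^{(1)}_i < ⋯ < l^{(m-m')}_i`. -/
def S (r m m' d : ℕ) (p : PathB r m m' d) (i : ℕ) : Set ℕ :=
  if i + m' ≤ r then
    {s | s < m ∧ p.a s i = p.a (s+1) i}
  else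
    {s | s ≤ m + r - i - m' ∧
      ((p.a s i ≤ r ∧ p.a s i = p.a (s+1) i) ∨ r + 1 ≤ p.a s i)}

/-- `l` is the increasing enumeration `s ↦ l^{(s)}_i` (for `1 ≤ s ≤ m-m'`) of the set
`S r m m' d p i`, for each `1 ≤ i ≤ d`. -/
def IsEnum (r m m' d : ℕ) (p : PathB r m m' d) (l : ℕ → ℕ → ℕ) : Prop :=
  ∀ i, 1 ≤ i → i ≤ d →
    (∀ s t, 1 ≤ s → s < t → t ≤ m - m' → l s i < l t i) ∧
    (∀ s, 1 ≤ s → s ≤ m - m' → l s i ∈ S r m m' d p i) ∧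
    (∀ x ∈ S r m m' d p i, ∃ s, 1 ≤ s ∧ s ≤ m - m' ∧ l s i = x)

/-- Scheduled time `l^{(s)}_i` of the `s`-th invariant of column `i`. -/
def ll (r : ℕ) (K : ℕ → ℕ → ℕ) (s i : ℕ) : ℕ :=
  if K s i ≤ r then K s i + s - 1 - i else r + s - i

/-- Number of `s ∈ [1,M]` with `K s i` unbarred (`≤ r`). -/
def uu (r M : ℕ) (K : ℕ → ℕ → ℕ) (i : ℕ) : ℕ :=
  ((Finset.Icc 1 M).filter (fun s => K s i ≤ r)).card

/-- Number of `s ∈ [1,M]` with scheduled time `< t`. -/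
def cc (r M : ℕ) (K : ℕ → ℕ → ℕ) (i t : ℕ) : ℕ :=
  ((Finset.Icc 1 M).filter (fun s => ll r K s i < t)).card

/-- The path. -/
def aa (r m m' d : ℕ) (K : ℕ → ℕ → ℕ) (t i : ℕ) : ℕ :=
  if i + m' ≤ r then i + t - cc r (m - m') K i t
  else if t ≤ r - i + uu r (m - m') K i then i + t - cc r (m - m') K i t
  else if t ≤ m + r - i - m' then K (t + i - r) i
  else 2*r+1 - d + i

section lemmas

variable {r M m m' d : ℕ} {K : ℕ → ℕ → ℕ}

lemma uu_le {i : ℕ} : uu r M K i ≤ M := by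
  have h := Finset.card_filter_le (Finset.Icc 1 M) (fun s => K s i ≤ r)
  simpa [Nat.card_Icc, uu] using h

lemma cc_le {i t : ℕ} : cc r M K i t ≤ M := by
  have h := Finset.card_filter_le (Finset.Icc 1 M) (fun s => ll r K s i < t)
  simpa [Nat.card_Icc, cc] using h

lemma cc_mono {i t t' : ℕ} (h : t ≤ t') : cc r M K i t ≤ cc r M K i t' := by
  apply Finset.card_le_card
  intro x hx
  simp only [Finset.mem_filter] at hx ⊢
  exact ⟨hx.1, lt_of_lt_of_le hx.2 h⟩

lemma Kmono
    (hcol1 : ∀ i, 1 ≤ i → i + m' ≤ r →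
      i ≤ K 1 i ∧ (∀ s, 1 ≤ s → s + 1 ≤ m - m' → K s i ≤ K (s+1) i) ∧
      K (m - m') i ≤ m' + i)
    (hcol2 : ∀ i, r < i + m' → i ≤ d →
      i ≤ K 1 i ∧ (∀ s, 1 ≤ s → s + 1 ≤ m - m' → K s i ≤ K (s+1) i) ∧
      K (m - m') i ≤ 2*r+1)
    {i : ℕ} (h1 : 1 ≤ i) (h2 : i ≤ d) :
    ∀ s t, 1 ≤ s → s ≤ t → t ≤ m - m' → K s i ≤ K t i := by
  intro s t hs hst htM
  induction t, hst using Nat.le_induction with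
  | base => exact le_rfl
  | succ t ht ih =>
    have step : K t i ≤ K (t+1) i := by
      rcases le_or_gt (i + m') r with hc | hc
      · exact (hcol1 i h1 hc).2.1 t (by omega) (by omega)
      · exact (hcol2 i hc h2).2.1 t (by omega) (by omega)
    exact le_trans (ih (by omega)) step

lemma Kge
    (hcol1 : ∀ i, 1 ≤ i → i + m' ≤ r →
      i ≤ K 1 i ∧ (∀ s, 1 ≤ s → s + 1 ≤ m - m' → K s i ≤ K (s+1) i) ∧
      K (m - m') i ≤ m' + i)
    (hcol2 : ∀ i, r < i + m' → i ≤ d →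
      i ≤ K 1 i ∧ (∀ s, 1 ≤ s → s + 1 ≤ m - m' → K s i ≤ K (s+1) i) ∧
      K (m - m') i ≤ 2*r+1)
    {i : ℕ} (h1 : 1 ≤ i) (h2 : i ≤ d) :
    ∀ s, 1 ≤ s → s ≤ m - m' → i ≤ K s i := by
  intro s hs hsM
  have h1i : i ≤ K 1 i := by
    rcases le_or_gt (i + m') r with hc | hc
    · exact (hcol1 i h1 hc).1
    · exact (hcol2 i hc h2).1
  exact le_trans h1i (Kmono hcol1 hcol2 h1 h2 1 s le_rfl hs hsM)

lemma Kub
    (hcol1 : ∀ i, 1 ≤ i → i + m' ≤ r →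
      i ≤ K 1 i ∧ (∀ s, 1 ≤ s → s + 1 ≤ m - m' → K s i ≤ K (s+1) i) ∧
      K (m - m') i ≤ m' + i)
    (hcol2 : ∀ i, r < i + m' → i ≤ d →
      i ≤ K 1 i ∧ (∀ s, 1 ≤ s → s + 1 ≤ m - m' → K s i ≤ K (s+1) i) ∧
      K (m - m') i ≤ 2*r+1)
    {i : ℕ} (h1 : 1 ≤ i) (h2 : i ≤ d) (hc : i + m' ≤ r) :
    ∀ s, 1 ≤ s → s ≤ m - m' → K s i ≤ m' + i := by
  intro s hs hsM
  exact le_trans (Kmono hcol1 hcol2 h1 h2 s (m - m') hs hsM le_rfl) (hcol1 i h1 hc).2.2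

lemma uu_iff
    (hKm : ∀ i, 1 ≤ i → i ≤ d → ∀ s t, 1 ≤ s → s ≤ t → t ≤ M → K s i ≤ K t i)
    {i : ℕ} (h1 : 1 ≤ i) (h2 : i ≤ d) {s : ℕ} (hs : 1 ≤ s) (hsM : s ≤ M) :
    K s i ≤ r ↔ s ≤ uu r M K i := by
  constructor
  · intro h
    have hsub : Finset.Icc 1 s ⊆ (Finset.Icc 1 M).filter (fun x => K x i ≤ r) := by
      intro x hx
      simp only [Finset.mem_Icc] at hx
      simp only [Finset.mem_filter, Finset.mem_Icc]
      exact ⟨⟨hx.1, le_trans hx.2 hsM⟩, le_trans (hKm i h1 h2 x s hx.1 hx.2 hsM) h⟩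
    have := Finset.card_le_card hsub
    simpa [Nat.card_Icc, uu] using this
  · intro h
    by_contra hgt
    push_neg at hgt
    have hsub : (Finset.Icc 1 M).filter (fun x => K x i ≤ r) ⊆ Finset.Icc 1 (s-1) := by
      intro x hx
      simp only [Finset.mem_filter, Finset.mem_Icc] at hx
      simp only [Finset.mem_Icc]
      refine ⟨hx.1.1, ?_⟩
      by_contra hxs
      push_neg at hxs
      have : K s i ≤ K x i := hKm i h1 h2 s x hs (by omega) hx.1.2
      omega
    have := Finset.card_le_card hsub
    have hc : uu r M K i ≤ s - 1 := by simpa [Nat.card_Icc, uu] using this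
    omega

lemma uu_mono
    (hrow : ∀ s i, 1 ≤ s → s ≤ M → 1 ≤ i → i < d →
      K s i ≤ K s (i+1) ∧ (K s i = K s (i+1) → K s i = r + 1))
    {i : ℕ} (h1 : 1 ≤ i) (h2 : i < d) :
    uu r M K (i+1) ≤ uu r M K i := by
  apply Finset.card_le_card
  intro x hx
  simp only [Finset.mem_filter, Finset.mem_Icc] at hx ⊢
  exact ⟨hx.1, le_trans (hrow x i hx.1.1 hx.1.2 h1 h2).1 hx.2⟩

lemma ll_mono
    (hKm : ∀ i, 1 ≤ i → i ≤ d → ∀ s t, 1 ≤ s → s ≤ t → t ≤ M → K s i ≤ K t i)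
    (hKge : ∀ i, 1 ≤ i → i ≤ d → ∀ s, 1 ≤ s → s ≤ M → i ≤ K s i)
    (hir : d < r)
    {i : ℕ} (h1 : 1 ≤ i) (h2 : i ≤ d) :
    ∀ s t, 1 ≤ s → s < t → t ≤ M → ll r K s i < ll r K t i := by
  intro s t hs hst htM
  have hKst : K s i ≤ K t i := hKm i h1 h2 s t hs (by omega) htM
  have hKs : i ≤ K s i := hKge i h1 h2 s hs (by omega)
  have hKt : i ≤ K t i := hKge i h1 h2 t (by omega) htM
  unfold ll
  split_ifs <;> omega

lemma ll_ge
    (hKge : ∀ i, 1 ≤ i → i ≤ d → ∀ s, 1 ≤ s → s ≤ M → i ≤ K s i)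
    (hir : d < r)
    {i : ℕ} (h1 : 1 ≤ i) (h2 : i ≤ d) {s : ℕ} (hs : 1 ≤ s) (hsM : s ≤ M) :
    s - 1 ≤ ll r K s i := by
  have hKs : i ≤ K s i := hKge i h1 h2 s hs hsM
  unfold ll
  split_ifs <;> omega

lemma cc_iff
    (hKm : ∀ i, 1 ≤ i → i ≤ d → ∀ s t, 1 ≤ s → s ≤ t → t ≤ M → K s i ≤ K t i)
    (hKge : ∀ i, 1 ≤ i → i ≤ d → ∀ s, 1 ≤ s → s ≤ M → i ≤ K s i)
    (hir : d < r)
    {i : ℕ} (h1 : 1 ≤ i) (h2 : i ≤ d) {s t : ℕ} (hs : 1 ≤ s) (hsM : s ≤ M) :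
    ll r K s i < t ↔ s ≤ cc r M K i t := by
  constructor
  · intro h
    have hsub : Finset.Icc 1 s ⊆ (Finset.Icc 1 M).filter (fun x => ll r K x i < t) := by
      intro x hx
      simp only [Finset.mem_Icc] at hx
      simp only [Finset.mem_filter, Finset.mem_Icc]
      refine ⟨⟨hx.1, le_trans hx.2 hsM⟩, ?_⟩
      rcases eq_or_lt_of_le hx.2 with he | hlt
      · rwa [he]
      · exact lt_trans (ll_mono hKm hKge hir h1 h2 x s hx.1 hlt hsM) h
    have := Finset.card_le_card hsub
    simpa [Nat.card_Icc, cc] using this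
  · intro h
    by_contra hgt
    push_neg at hgt
    have hsub : (Finset.Icc 1 M).filter (fun x => ll r K x i < t) ⊆ Finset.Icc 1 (s-1) := by
      intro x hx
      simp only [Finset.mem_filter, Finset.mem_Icc] at hx
      simp only [Finset.mem_Icc]
      refine ⟨hx.1.1, ?_⟩
      by_contra hxs
      push_neg at hxs
      rcases eq_or_lt_of_le (show s ≤ x by omega) with he | hlt
      · rw [← he] at hx; omega
      · have := ll_mono hKm hKge hir h1 h2 s x hs hlt hx.1.2
        omega
    have := Finset.card_le_card hsub
    have hc : cc r M K i t ≤ s - 1 := by simpa [Nat.card_Icc, cc] using this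
    omega

lemma cc_le_t
    (hKm : ∀ i, 1 ≤ i → i ≤ d → ∀ s t, 1 ≤ s → s ≤ t → t ≤ M → K s i ≤ K t i)
    (hKge : ∀ i, 1 ≤ i → i ≤ d → ∀ s, 1 ≤ s → s ≤ M → i ≤ K s i)
    (hir : d < r)
    {i : ℕ} (h1 : 1 ≤ i) (h2 : i ≤ d) (t : ℕ) :
    cc r M K i t ≤ t := by
  set c := cc r M K i t with hc
  rcases Nat.eq_zero_or_pos c with h0 | hpos
  · omega
  have hcM : c ≤ M := cc_le
  have hll : ll r K c i < t := (cc_iff hKm hKge hir h1 h2 hpos hcM).2 le_rfl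
  have := ll_ge hKge hir h1 h2 hpos hcM
  omega

lemma cc_step
    (hKm : ∀ i, 1 ≤ i → i ≤ d → ∀ s t, 1 ≤ s → s ≤ t → t ≤ M → K s i ≤ K t i)
    (hKge : ∀ i, 1 ≤ i → i ≤ d → ∀ s, 1 ≤ s → s ≤ M → i ≤ K s i)
    (hir : d < r)
    {i : ℕ} (h1 : 1 ≤ i) (h2 : i ≤ d) (t : ℕ) :
    cc r M K i (t+1) ≤ cc r M K i t + 1 := by
  set c := cc r M K i (t+1) with hcdef
  by_contra hgt
  push_neg at hgt
  have hc1 : 1 ≤ c := by omega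
  have hcM : c ≤ M := cc_le
  have hlc : ll r K c i < t + 1 := (cc_iff hKm hKge hir h1 h2 hc1 hcM).2 le_rfl
  have hnot : ¬ ll r K (c-1) i < t := by
    intro h
    have := (cc_iff hKm hKge hir h1 h2 (show 1 ≤ c - 1 by omega) (by omega)).1 h
    omega
  have hmono := ll_mono hKm hKge hir h1 h2 (c-1) c (by omega) (by omega) hcM
  omega

end lemmas

/-- Realizability of admissible families: any family `(K^{(s)}_i)` satisfying the
conditions `(*)` of Theorem 5.6 arises as the family of invariants `k^{(s)}_i` of
some path `p ∈ X_d(m,m')` (case `m' + d > r`). -/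
theorem realizability (r m m' d : ℕ) (hr : 2 ≤ r) (hm'1 : 1 ≤ m') (hm'm : m' ≤ m)
    (hmr : m ≤ r) (hd1 : 1 ≤ d) (hdr : d ≤ r - 1) (hcase : r < m' + d)
    (K : ℕ → ℕ → ℕ)
    -- all values lie in `J`
    (hmem : ∀ s i, 1 ≤ s → s ≤ m - m' → 1 ≤ i → i ≤ d → 1 ≤ K s i ∧ K s i ≤ 2*r+1)
    -- `K^{(s)}_1 ≤ K^{(s)}_2 ≤ ⋯ ≤ K^{(s)}_d`, with equality only at `0`
    (hrow : ∀ s i, 1 ≤ s → s ≤ m - m' → 1 ≤ i → i < d →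
      K s i ≤ K s (i+1) ∧ (K s i = K s (i+1) → K s i = r + 1))
    -- `i ≤ K^{(1)}_i ≤ ⋯ ≤ K^{(m-m')}_i ≤ m'+i` for `1 ≤ i ≤ r-m'`
    (hcol1 : ∀ i, 1 ≤ i → i + m' ≤ r →
      i ≤ K 1 i ∧ (∀ s, 1 ≤ s → s + 1 ≤ m - m' → K s i ≤ K (s+1) i) ∧
      K (m - m') i ≤ m' + i)
    -- `i ≤ K^{(1)}_i ≤ ⋯ ≤ K^{(m-m')}_i ≤ 1̄` for `r-m'+1 ≤ i ≤ d`
    (hcol2 : ∀ i, r < i + m' → i ≤ d →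
      i ≤ K 1 i ∧ (∀ s, 1 ≤ s → s + 1 ≤ m - m' → K s i ≤ K (s+1) i) ∧
      K (m - m') i ≤ 2*r+1)
    -- `K^{(s)}_i < K^{(s+1)}_{i+1}`
    (hdiag : ∀ s i, 1 ≤ s → s + 1 ≤ m - m' → 1 ≤ i → i < d →
      K s i < K (s+1) (i+1)) :
    ∃ (p : PathB r m m' d) (l : ℕ → ℕ → ℕ),
      IsEnum r m m' d p l ∧
      ∀ s i, 1 ≤ s → s ≤ m - m' → 1 ≤ i → i ≤ d → p.a (l s i) i = K s i := by
  have hdr' : d < r := by omega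
  have hKm : ∀ i, 1 ≤ i → i ≤ d → ∀ s t, 1 ≤ s → s ≤ t → t ≤ m - m' → K s i ≤ K t i :=
    fun i h1 h2 => Kmono hcol1 hcol2 h1 h2
  have hKge : ∀ i, 1 ≤ i → i ≤ d → ∀ s, 1 ≤ s → s ≤ m - m' → i ≤ K s i :=
    fun i h1 h2 => Kge hcol1 hcol2 h1 h2
  have hKub : ∀ i, 1 ≤ i → i ≤ d → i + m' ≤ r → ∀ s, 1 ≤ s → s ≤ m - m' → K s i ≤ m' + i :=
    fun i h1 h2 hc => Kub hcol1 hcol2 h1 h2 hc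
  have huiff : ∀ i, 1 ≤ i → i ≤ d → ∀ s, 1 ≤ s → s ≤ m - m' →
      (K s i ≤ r ↔ s ≤ uu r (m - m') K i) :=
    fun i h1 h2 s hs hsM => uu_iff hKm h1 h2 hs hsM
  have hciff : ∀ i, 1 ≤ i → i ≤ d → ∀ s t, 1 ≤ s → s ≤ m - m' →
      (ll r K s i < t ↔ s ≤ cc r (m - m') K i t) :=
    fun i h1 h2 s t hs hsM => cc_iff hKm hKge hdr' h1 h2 hs hsM
  have hct : ∀ i, 1 ≤ i → i ≤ d → ∀ t, cc r (m - m') K i t ≤ t :=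
    fun i h1 h2 => cc_le_t hKm hKge hdr' h1 h2
  have hcstep : ∀ i, 1 ≤ i → i ≤ d → ∀ t, cc r (m - m') K i (t+1) ≤ cc r (m - m') K i t + 1 :=
    fun i h1 h2 => cc_step hKm hKge hdr' h1 h2
  have hum : ∀ i, 1 ≤ i → i < d → uu r (m - m') K (i+1) ≤ uu r (m - m') K i :=
    fun i h1 h2 => uu_mono hrow h1 h2
  -- `cc` below the unbarred bound
  have hcLow : ∀ i, 1 ≤ i → i ≤ d → i + m' ≤ r → ∀ t, t ≤ m →
      t ≤ m' + cc r (m - m') K i t := by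
    intro i h1 h2 hc t ht
    rcases le_or_gt t m' with h | h
    · omega
    · have hs1 : 1 ≤ t - m' := by omega
      have hsM : t - m' ≤ m - m' := by omega
      have hKu := hKub i h1 h2 hc (t - m') hs1 hsM
      have hKg := hKge i h1 h2 (t - m') hs1 hsM
      have hl : ll r K (t - m') i < t := by
        unfold ll; rw [if_pos (by omega)]; omega
      have := (hciff i h1 h2 (t - m') t hs1 hsM).1 hl
      omega
  -- phase-1 facts for barred columns
  have hcB : ∀ i, 1 ≤ i → i ≤ d → r < i + m' → ∀ t, t ≤ r - i + uu r (m - m') K i →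
      cc r (m - m') K i t ≤ uu r (m - m') K i ∧ t ≤ cc r (m - m') K i t + (r - i) := by
    intro i h1 h2 hc t ht
    have huM : uu r (m - m') K i ≤ m - m' := uu_le
    constructor
    · by_contra hgt
      push_neg at hgt
      have hcM : cc r (m - m') K i t ≤ m - m' := cc_le
      have hl : ll r K (uu r (m - m') K i + 1) i < t :=
        (hciff i h1 h2 (uu r (m - m') K i + 1) t (by omega) (by omega)).2 (by omega)
      have hKgt : ¬ K (uu r (m - m') K i + 1) i ≤ r := by
        intro hle
        have := (huiff i h1 h2 (uu r (m - m') K i + 1) (by omega) (by omega)).1 hle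
        omega
      have hll : ll r K (uu r (m - m') K i + 1) i = r + (uu r (m - m') K i + 1) - i := by
        unfold ll; rw [if_neg hKgt]
      omega
    · rcases le_or_gt t (r - i) with h | h
      · omega
      · have hs1 : 1 ≤ t + i - r := by omega
        have hsu : t + i - r ≤ uu r (m - m') K i := by omega
        have hsM : t + i - r ≤ m - m' := by omega
        have hKle : K (t + i - r) i ≤ r := (huiff i h1 h2 _ hs1 hsM).2 hsu
        have hKg := hKge i h1 h2 (t + i - r) hs1 hsM
        have hl : ll r K (t + i - r) i < t := by
          unfold ll; rw [if_pos hKle]; omega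
        have := (hciff i h1 h2 (t + i - r) t hs1 hsM).1 hl
        omega
  have hcEnd : ∀ i, 1 ≤ i → i ≤ d → r < i + m' →
      cc r (m - m') K i (r - i + uu r (m - m') K i) = uu r (m - m') K i := by
    intro i h1 h2 hc
    have huM : uu r (m - m') K i ≤ m - m' := uu_le
    have hle : cc r (m - m') K i (r - i + uu r (m - m') K i) ≤ uu r (m - m') K i :=
      (hcB i h1 h2 hc _ le_rfl).1
    rcases Nat.eq_zero_or_pos (uu r (m - m') K i) with h0 | hpos
    · omega
    · have hKle : K (uu r (m - m') K i) i ≤ r := (huiff i h1 h2 _ hpos huM).2 le_rfl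
      have hKg := hKge i h1 h2 (uu r (m - m') K i) hpos huM
      have hl : ll r K (uu r (m - m') K i) i < r - i + uu r (m - m') K i := by
        unfold ll; rw [if_pos hKle]; omega
      have := (hciff i h1 h2 (uu r (m - m') K i) _ hpos huM).1 hl
      omega
  have hcFull : ∀ i, 1 ≤ i → i ≤ d → i + m' ≤ r → cc r (m - m') K i m = m - m' := by
    intro i h1 h2 hc
    have hcM : cc r (m - m') K i m ≤ m - m' := cc_le
    rcases Nat.eq_zero_or_pos (m - m') with h0 | hpos
    · omega
    · have hKu := hKub i h1 h2 hc (m - m') hpos le_rfl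
      have hKg := hKge i h1 h2 (m - m') hpos le_rfl
      have hl : ll r K (m - m') i < m := by
        unfold ll; rw [if_pos (by omega)]; omega
      have := (hciff i h1 h2 (m - m') m hpos le_rfl).1 hl
      omega
  have hKbound : ∀ i, 1 ≤ i → i ≤ d → 1 ≤ m - m' → K (m - m') i ≤ 2*r+1 - d + i := by
    intro i h1 h2 hM
    have key : ∀ j, j ≤ d - 1 → K (m - m') (d - j) ≤ 2*r + 1 - j := by
      intro j
      induction j with
      | zero => intro _; simpa using (hcol2 d (by omega) le_rfl).2.2
      | succ j ih =>
        intro hj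
        have ihv := ih (by omega)
        have hi1 : 1 ≤ d - (j+1) := by omega
        have hrw := hrow (m - m') (d - (j+1)) hM le_rfl hi1 (by omega)
        have hsucc : d - (j+1) + 1 = d - j := by omega
        rw [hsucc] at hrw
        rcases eq_or_lt_of_le hrw.1 with he | hlt
        · have := hrw.2 he; omega
        · omega
    have hk := key (d - i) (by omega)
    rw [show d - (d - i) = i by omega] at hk
    omega
  -- value formula lemmas
  have hA1 : ∀ i t, i + m' ≤ r → aa r m m' d K t i = i + t - cc r (m - m') K i t := by
    intro i t h; unfold aa; rw [if_pos h]
  have hA1' : ∀ i t, r < i + m' → t ≤ r - i + uu r (m - m') K i →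
      aa r m m' d K t i = i + t - cc r (m - m') K i t := by
    intro i t h h2; unfold aa; rw [if_neg (by omega), if_pos h2]
  have hA2 : ∀ i t, r < i + m' → r - i + uu r (m - m') K i < t → t ≤ m + r - i - m' →
      aa r m m' d K t i = K (t + i - r) i := by
    intro i t h h2 h3; unfold aa; rw [if_neg (by omega), if_neg (by omega), if_pos h3]
  have hA3 : ∀ i t, i ≤ d → r < i + m' → m + r - i - m' < t →
      aa r m m' d K t i = 2*r+1 - d + i := by
    intro i t hid h h2
    unfold aa
    have hu : uu r (m - m') K i ≤ m - m' := uu_le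
    rw [if_neg (by omega), if_neg (by omega), if_neg (by omega)]
  -- bounds in phase 1 / unbarred
  have hvUnb : ∀ i, 1 ≤ i → i ≤ d → i + m' ≤ r → ∀ t, t ≤ m →
      i ≤ aa r m m' d K t i ∧ aa r m m' d K t i ≤ m' + i := by
    intro i h1 h2 hc t ht
    rw [hA1 i t hc]
    have := hct i h1 h2 t
    have := hcLow i h1 h2 hc t ht
    omega
  have hvP1 : ∀ i, 1 ≤ i → i ≤ d → r < i + m' → ∀ t, t ≤ r - i + uu r (m - m') K i →
      i ≤ aa r m m' d K t i ∧ aa r m m' d K t i ≤ r := by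
    intro i h1 h2 hc t ht
    rw [hA1' i t hc ht]
    have := hct i h1 h2 t
    have := hcB i h1 h2 hc t ht
    omega
  have hvEnd : ∀ i, 1 ≤ i → i ≤ d → r < i + m' →
      aa r m m' d K (r - i + uu r (m - m') K i) i = r := by
    intro i h1 h2 hc
    rw [hA1' i _ hc le_rfl, hcEnd i h1 h2 hc]
    omega
  -- phase-2 index bounds and value bound
  have hvP2 : ∀ i, 1 ≤ i → i ≤ d → r < i + m' → ∀ t, r - i + uu r (m - m') K i < t →
      t ≤ m + r - i - m' →
      aa r m m' d K t i = K (t + i - r) i ∧ 1 ≤ t + i - r ∧ t + i - r ≤ m - m' ∧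
      uu r (m - m') K i < t + i - r ∧ r + 1 ≤ aa r m m' d K t i := by
    intro i h1 h2 hc t ht1 ht2
    have he := hA2 i t hc ht1 ht2
    have hidx1 : 1 ≤ t + i - r := by omega
    have hidx2 : t + i - r ≤ m - m' := by omega
    have hidx3 : uu r (m - m') K i < t + i - r := by omega
    have hKgt : r < K (t + i - r) i := by
      by_contra hle
      push_neg at hle
      have := (huiff i h1 h2 (t + i - r) hidx1 hidx2).1 hle
      omega
    exact ⟨he, hidx1, hidx2, hidx3, by omega⟩
  -- cross-column comparison of cc
  have hcComp : ∀ i, 1 ≤ i → i < d → ∀ t,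
      (i + m' ≤ r ∨ t ≤ r - i + uu r (m - m') K i) →
      cc r (m - m') K (i+1) t ≤ cc r (m - m') K i t := by
    intro i h1 h2 t hdisj
    apply Finset.card_le_card
    intro x hx
    simp only [Finset.mem_filter, Finset.mem_Icc] at hx ⊢
    obtain ⟨⟨hx1, hxM⟩, hlt⟩ := hx
    refine ⟨⟨hx1, hxM⟩, ?_⟩
    have hrw := hrow x i hx1 hxM h1 h2
    have hKgi := hKge i h1 (by omega) x hx1 hxM
    have hKgi1 := hKge (i+1) (by omega) (by omega) x hx1 hxM
    rcases le_or_gt (K x i) r with hKi | hKi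
    · rcases le_or_gt (K x (i+1)) r with hKi1 | hKi1
      · have hstrict : K x i < K x (i+1) := by
          rcases eq_or_lt_of_le hrw.1 with he | hlt'
          · have := hrw.2 he; omega
          · exact hlt'
        unfold ll at hlt ⊢
        rw [if_pos hKi1] at hlt; rw [if_pos hKi]
        omega
      · unfold ll at hlt ⊢
        rw [if_neg (by omega)] at hlt; rw [if_pos hKi]
        omega
    · exfalso
      rcases hdisj with hc | hc
      · have := hKub i h1 (by omega) hc x hx1 hxM; omega
      · have hxu : uu r (m - m') K i < x := by
          by_contra hxe
          push_neg at hxe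
          have := (huiff i h1 (by omega) x hx1 hxM).2 hxe
          omega
        have hKi1 : ¬ K x (i+1) ≤ r := by omega
        unfold ll at hlt
        rw [if_neg hKi1] at hlt
        omega
  -- the path fields
  have fmem : ∀ t, t ≤ m → ∀ i, 1 ≤ i → i ≤ d →
      1 ≤ aa r m m' d K t i ∧ aa r m m' d K t i ≤ 2*r+1 := by
    intro t ht i h1 h2
    rcases le_or_gt (i + m') r with hc | hc
    · have := hvUnb i h1 h2 hc t ht
      omega
    · rcases le_or_gt t (r - i + uu r (m - m') K i) with hp1 | hp1
      · have := hvP1 i h1 h2 hc t hp1; omega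
      · rcases le_or_gt t (m + r - i - m') with hp2 | hp2
        · obtain ⟨he, hi1, hi2, _, hv⟩ := hvP2 i h1 h2 hc t hp1 hp2
          have := hmem (t+i-r) i hi1 hi2 h1 h2
          omega
        · rw [hA3 i t h2 hc hp2]; omega
  have fsr : ∀ t, t ≤ m → ∀ i, 1 ≤ i → i < d →
      aa r m m' d K t i < aa r m m' d K t (i+1) := by
    intro t ht i h1 hid
    have h2 : i ≤ d := by omega
    have h1' : 1 ≤ i + 1 := by omega
    have h2' : i + 1 ≤ d := hid
    have e1 := hct i h1 h2 t
    have e2 := hct (i+1) h1' h2' t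
    rcases le_or_gt (i + 1 + m') r with hcc | hcc
    · have hc : i + m' ≤ r := by omega
      rw [hA1 i t hc, hA1 (i+1) t hcc]
      have hcomp := hcComp i h1 hid t (Or.inl hc)
      omega
    · rcases le_or_gt (i + m') r with hc | hc
      · have hubv := hvUnb i h1 h2 hc t ht
        rcases le_or_gt t (r - (i+1) + uu r (m - m') K (i+1)) with hq1 | hq1
        · rw [hA1 i t hc, hA1' (i+1) t hcc hq1]
          have hcomp := hcComp i h1 hid t (Or.inl hc)
          omega
        · rcases le_or_gt t (m + r - (i+1) - m') with hq2 | hq2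
          · have := (hvP2 (i+1) h1' h2' (by omega) t hq1 hq2).2.2.2.2
            omega
          · rw [hA3 (i+1) t h2' (by omega) hq2]
            omega
      · rcases le_or_gt t (r - i + uu r (m - m') K i) with hp1 | hp1
        · have hv1 := hvP1 i h1 h2 hc t hp1
          rcases le_or_gt t (r - (i+1) + uu r (m - m') K (i+1)) with hq1 | hq1
          · rw [hA1' i t hc hp1, hA1' (i+1) t hcc hq1]
            have hcomp := hcComp i h1 hid t (Or.inr hp1)
            omega
          · rcases le_or_gt t (m + r - (i+1) - m') with hq2 | hq2
            · have := (hvP2 (i+1) h1' h2' (by omega) t hq1 hq2).2.2.2.2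
              omega
            · rw [hA3 (i+1) t h2' (by omega) hq2]
              omega
        · rcases le_or_gt t (m + r - i - m') with hp2 | hp2
          · obtain ⟨he, hi1, hi2, hi3, hv⟩ := hvP2 i h1 h2 hc t hp1 hp2
            have humono := hum i h1 hid
            rcases le_or_gt t (m + r - (i+1) - m') with hq2 | hq2
            · have hq1 : r - (i+1) + uu r (m - m') K (i+1) < t := by omega
              obtain ⟨he', hi1', hi2', _, hv'⟩ := hvP2 (i+1) h1' h2' (by omega) t hq1 hq2
              have hd := hdiag (t+i-r) i hi1 (by omega) h1 hid
              have hterm : t + (i+1) - r = (t+i-r) + 1 := by omega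
              rw [hterm] at he'
              omega
            · rw [hA3 (i+1) t h2' (by omega) hq2]
              have ht2 : t + i - r = m - m' := by omega
              rw [ht2] at he
              have := hKbound i h1 h2 (by omega)
              omega
          · rw [hA3 i t h2 hc hp2, hA3 (i+1) t h2' (by omega) (by omega)]
            omega
  have fsl : ∀ t, t < m → ∀ i, 1 ≤ i → i ≤ d → aa r m m' d K t i ≤ r - 1 →
      aa r m m' d K (t+1) i = aa r m m' d K t i ∨
      aa r m m' d K (t+1) i = aa r m m' d K t i + 1 := by
    intro t ht i h1 h2 hle
    have e1 := hct i h1 h2 t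
    have e2 := hcstep i h1 h2 t
    have e3 : cc r (m - m') K i t ≤ cc r (m - m') K i (t+1) := cc_mono (Nat.le_succ t)
    rcases le_or_gt (i + m') r with hc | hc
    · rw [hA1 i t hc, hA1 i (t+1) hc]
      omega
    · have hp1 : t ≤ r - i + uu r (m - m') K i := by
        by_contra hgt
        push_neg at hgt
        rcases le_or_gt t (m + r - i - m') with hp2 | hp2
        · have := (hvP2 i h1 h2 hc t hgt hp2).2.2.2.2
          omega
        · rw [hA3 i t h2 hc hp2] at hle; omega
      have hcb := hcB i h1 h2 hc t hp1
      rw [hA1' i t hc hp1] at hle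
      have hp1' : t + 1 ≤ r - i + uu r (m - m') K i := by omega
      rw [hA1' i t hc hp1, hA1' i (t+1) hc hp1']
      omega
  have fsh : ∀ t, t < m → ∀ i, 1 ≤ i → i ≤ d → r ≤ aa r m m' d K t i →
      aa r m m' d K t i ≤ aa r m m' d K (t+1) i ∧ aa r m m' d K (t+1) i ≤ 2*r+1 := by
    intro t ht i h1 h2 hge
    have e1 := hct i h1 h2 t
    have e2 := hcstep i h1 h2 t
    rcases le_or_gt (i + m') r with hc | hc
    · have hb2 := hvUnb i h1 h2 hc (t+1) (by omega)
      constructor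
      · rw [hA1 i t hc, hA1 i (t+1) hc]
        omega
      · omega
    · rcases le_or_gt t (r - i + uu r (m - m') K i) with hp1 | hp1
      · rcases le_or_gt (t+1) (r - i + uu r (m - m') K i) with hq1 | hq1
        · have hv2 := hvP1 i h1 h2 hc (t+1) hq1
          constructor
          · rw [hA1' i t hc hp1, hA1' i (t+1) hc hq1]
            omega
          · omega
        · have hteq : t = r - i + uu r (m - m') K i := by omega
          have hvt : aa r m m' d K t i = r := by rw [hteq]; exact hvEnd i h1 h2 hc
          rcases le_or_gt (t+1) (m + r - i - m') with hq2 | hq2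
          · obtain ⟨he, hi1, hi2, _, hv⟩ := hvP2 i h1 h2 hc (t+1) (by omega) hq2
            have := hmem (t+1+i-r) i hi1 hi2 h1 h2
            omega
          · rw [hA3 i (t+1) h2 hc hq2]
            omega
      · rcases le_or_gt t (m + r - i - m') with hp2 | hp2
        · obtain ⟨he, hi1, hi2, hi3, hv⟩ := hvP2 i h1 h2 hc t hp1 hp2
          rcases le_or_gt (t+1) (m + r - i - m') with hq2 | hq2
          · obtain ⟨he', hi1', hi2', _, hv'⟩ := hvP2 i h1 h2 hc (t+1) (by omega) hq2
            have hmono := hKm i h1 h2 (t+i-r) (t+1+i-r) hi1 (by omega) hi2'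
            have hub := hmem (t+1+i-r) i hi1' hi2' h1 h2
            omega
          · rw [hA3 i (t+1) h2 hc hq2]
            have ht2 : t + i - r = m - m' := by omega
            rw [ht2] at he
            have := hKbound i h1 h2 (by omega)
            omega
        · rw [hA3 i t h2 hc hp2, hA3 i (t+1) h2 hc (by omega)]
          omega
  have fini : ∀ i, 1 ≤ i → i ≤ d → aa r m m' d K 0 i = i := by
    intro i h1 h2
    have h0 := hct i h1 h2 0
    rcases le_or_gt (i + m') r with hc | hc
    · rw [hA1 i 0 hc]; omega
    · rw [hA1' i 0 hc (by omega)]; omega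
  have ffin : ∀ i, 1 ≤ i → i ≤ d →
      aa r m m' d K m i = if m' + i ≤ r then m' + i else 2*r+1 - d + i := by
    intro i h1 h2
    rcases le_or_gt (i + m') r with hc | hc
    · rw [hA1 i m hc, hcFull i h1 h2 hc, if_pos (by omega)]
      omega
    · rw [hA3 i m h2 hc (by omega), if_neg (by omega)]
  have fbc : ∀ t, t < m → ∀ i, 1 ≤ i → i < d → r + 1 ≤ aa r m m' d K (t+1) i →
      aa r m m' d K (t+1) i ≤ aa r m m' d K t (i+1) ∧
      (aa r m m' d K (t+1) i = aa r m m' d K t (i+1) →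
        aa r m m' d K (t+1) i = r + 1) := by
    intro t ht i h1 hid hge
    have h2 : i ≤ d := by omega
    have h1' : 1 ≤ i + 1 := by omega
    have h2' : i + 1 ≤ d := hid
    have hc : r < i + m' := by
      by_contra hcn
      push_neg at hcn
      have := hvUnb i h1 h2 hcn (t+1) (by omega)
      omega
    rcases le_or_gt (t+1) (r - i + uu r (m - m') K i) with hp1 | hp1
    · have := hvP1 i h1 h2 hc (t+1) hp1
      omega
    · rcases le_or_gt (t+1) (m + r - i - m') with hp2 | hp2
      · obtain ⟨he, hi1, hi2, hi3, hv⟩ := hvP2 i h1 h2 hc (t+1) hp1 hp2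
        have humono := hum i h1 hid
        have hq1 : r - (i+1) + uu r (m - m') K (i+1) < t := by omega
        have hq2 : t ≤ m + r - (i+1) - m' := by omega
        obtain ⟨he', hi1', hi2', _, hv'⟩ := hvP2 (i+1) h1' h2' (by omega) t hq1 hq2
        have hterm : t + (i+1) - r = (t+1) + i - r := by omega
        rw [hterm] at he'
        have hrw := hrow ((t+1)+i-r) i hi1 hi2 h1 hid
        constructor
        · omega
        · intro heq
          rw [he, he'] at heq
          have := hrw.2 heq
          rw [he]
          omega
      · rw [hA3 i (t+1) h2 hc hp2, hA3 (i+1) t h2' (by omega) (by omega)]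
        constructor
        · omega
        · intro h; omega
  -- the stay-value computation
  have hstay : ∀ i, 1 ≤ i → i ≤ d → ∀ s, 1 ≤ s → s ≤ m - m' →
      cc r (m - m') K i (ll r K s i) = s - 1 ∧
      cc r (m - m') K i (ll r K s i + 1) = s := by
    intro i h1 h2 s hs hsM
    constructor
    · have hle : cc r (m - m') K i (ll r K s i) ≤ s - 1 := by
        by_contra h
        push_neg at h
        have := (hciff i h1 h2 s (ll r K s i) hs hsM).2 (by omega)
        omega
      have hge : s - 1 ≤ cc r (m - m') K i (ll r K s i) := by
        rcases Nat.eq_zero_or_pos (s-1) with h0 | hpos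
        · omega
        · have hmono := ll_mono hKm hKge hdr' h1 h2 (s-1) s (by omega) (by omega) hsM
          exact (hciff i h1 h2 (s-1) (ll r K s i) (by omega) (by omega)).1 hmono
      omega
    · have hge : s ≤ cc r (m - m') K i (ll r K s i + 1) :=
        (hciff i h1 h2 s (ll r K s i + 1) hs hsM).1 (by omega)
      have hle : cc r (m - m') K i (ll r K s i + 1) ≤ s := by
        by_contra h
        push_neg at h
        have hcM : cc r (m - m') K i (ll r K s i + 1) ≤ m - m' := cc_le
        have hlt := (hciff i h1 h2 (s+1) (ll r K s i + 1) (by omega) (by omega)).2 (by omega)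
        have hmono := ll_mono hKm hKge hdr' h1 h2 s (s+1) hs (by omega) (by omega)
        omega
      omega
  have hlval : ∀ i, 1 ≤ i → i ≤ d → ∀ s, 1 ≤ s → s ≤ m - m' →
      aa r m m' d K (ll r K s i) i = K s i := by
    intro i h1 h2 s hs hsM
    have hst := hstay i h1 h2 s hs hsM
    have hKg := hKge i h1 h2 s hs hsM
    have huM : uu r (m - m') K i ≤ m - m' := uu_le
    rcases le_or_gt (K s i) r with hKs | hKs
    · have hll : ll r K s i = K s i + s - 1 - i := by unfold ll; rw [if_pos hKs]
      rcases le_or_gt (i + m') r with hc | hc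
      · rw [hA1 i _ hc]; omega
      · have hsu : s ≤ uu r (m - m') K i := (huiff i h1 h2 s hs hsM).1 hKs
        have hp1 : ll r K s i ≤ r - i + uu r (m - m') K i := by omega
        rw [hA1' i _ hc hp1]; omega
    · have hc : r < i + m' := by
        by_contra hcn
        push_neg at hcn
        have := hKub i h1 h2 hcn s hs hsM
        omega
      have hsu : uu r (m - m') K i < s := by
        by_contra hse
        push_neg at hse
        have := (huiff i h1 h2 s hs hsM).2 hse
        omega
      have hll : ll r K s i = r + s - i := by unfold ll; rw [if_neg (by omega)]
      have hp1 : r - i + uu r (m - m') K i < ll r K s i := by omega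
      have hp2 : ll r K s i ≤ m + r - i - m' := by omega
      rw [hA2 i _ hc hp1 hp2]
      rw [show ll r K s i + i - r = s from by omega]
  have hlstep : ∀ i, 1 ≤ i → i ≤ d → ∀ s, 1 ≤ s → s ≤ m - m' → K s i ≤ r →
      aa r m m' d K (ll r K s i + 1) i = K s i := by
    intro i h1 h2 s hs hsM hKs
    have hst := hstay i h1 h2 s hs hsM
    have hKg := hKge i h1 h2 s hs hsM
    have hll : ll r K s i = K s i + s - 1 - i := by unfold ll; rw [if_pos hKs]
    rcases le_or_gt (i + m') r with hc | hc
    · rw [hA1 i _ hc]; omega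
    · have hsu : s ≤ uu r (m - m') K i := (huiff i h1 h2 s hs hsM).1 hKs
      have hp1 : ll r K s i + 1 ≤ r - i + uu r (m - m') K i := by omega
      rw [hA1' i _ hc hp1]; omega
  refine ⟨⟨aa r m m' d K, fmem, fsr, fsl, fsh, fini, ffin, fbc⟩, ll r K, ?_, ?_⟩
  · -- IsEnum
    intro i h1 h2
    refine ⟨fun s t hs hst htM => ll_mono hKm hKge hdr' h1 h2 s t hs hst htM, ?_, ?_⟩
    · -- membership in S
      intro s hs hsM
      unfold S
      rcases le_or_gt (i + m') r with hc | hc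
      · rw [if_pos hc]
        simp only [Set.mem_setOf_eq]
        have hKs : K s i ≤ r := by
          have := hKub i h1 h2 hc s hs hsM
          omega
        have hKg := hKge i h1 h2 s hs hsM
        have hll : ll r K s i = K s i + s - 1 - i := by unfold ll; rw [if_pos hKs]
        have hub := hKub i h1 h2 hc s hs hsM
        constructor
        · show ll r K s i < m
          omega
        · show aa r m m' d K (ll r K s i) i = aa r m m' d K (ll r K s i + 1) i
          rw [hlval i h1 h2 s hs hsM, hlstep i h1 h2 s hs hsM hKs]
      · rw [if_neg (by omega)]
        simp only [Set.mem_setOf_eq]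
        have hKg := hKge i h1 h2 s hs hsM
        rcases le_or_gt (K s i) r with hKs | hKs
        · have hll : ll r K s i = K s i + s - 1 - i := by unfold ll; rw [if_pos hKs]
          refine ⟨by omega, Or.inl ⟨?_, ?_⟩⟩
          · show aa r m m' d K (ll r K s i) i ≤ r
            rw [hlval i h1 h2 s hs hsM]
            exact hKs
          · show aa r m m' d K (ll r K s i) i = aa r m m' d K (ll r K s i + 1) i
            rw [hlval i h1 h2 s hs hsM, hlstep i h1 h2 s hs hsM hKs]
        · have hll : ll r K s i = r + s - i := by unfold ll; rw [if_neg (by omega)]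
          have hv := hlval i h1 h2 s hs hsM
          refine ⟨by omega, Or.inr ?_⟩
          show r + 1 ≤ aa r m m' d K (ll r K s i) i
          omega
    · -- surjectivity
      intro x hx
      unfold S at hx
      rcases le_or_gt (i + m') r with hc | hc
      · rw [if_pos hc] at hx
        simp only [Set.mem_setOf_eq] at hx
        obtain ⟨hxm, hstayx⟩ := hx
        have hstx : aa r m m' d K x i = aa r m m' d K (x+1) i := hstayx
        rw [hA1 i x hc, hA1 i (x+1) hc] at hstx
        have e1 := hct i h1 h2 x
        have e2 := hcstep i h1 h2 x
        have e3 : cc r (m - m') K i x ≤ cc r (m - m') K i (x+1) := cc_mono (Nat.le_succ x)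
        have e4 : cc r (m - m') K i (x+1) ≤ m - m' := cc_le
        have heq : cc r (m - m') K i (x+1) = cc r (m - m') K i x + 1 := by omega
        refine ⟨cc r (m - m') K i x + 1, by omega, by omega, ?_⟩
        have hlt : ll r K (cc r (m - m') K i x + 1) i < x + 1 :=
          (hciff i h1 h2 _ (x+1) (by omega) (by omega)).2 (by omega)
        have hnlt : ¬ ll r K (cc r (m - m') K i x + 1) i < x := by
          intro hl
          have := (hciff i h1 h2 _ x (by omega) (by omega)).1 hl
          omega
        omega
      · rw [if_neg (by omega)] at hx
        simp only [Set.mem_setOf_eq] at hx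
        obtain ⟨hxT, hcase2⟩ := hx
        rcases hcase2 with ⟨hle, hstayx⟩ | hbar
        · have hstx : aa r m m' d K x i = aa r m m' d K (x+1) i := hstayx
          have hvle : aa r m m' d K x i ≤ r := hle
          have hp1 : x ≤ r - i + uu r (m - m') K i := by
            by_contra hg
            push_neg at hg
            rcases le_or_gt x (m + r - i - m') with hp2 | hp2
            · have := (hvP2 i h1 h2 hc x hg hp2).2.2.2.2
              omega
            · have := hA3 i x h2 hc hp2
              omega
          rcases lt_or_eq_of_le hp1 with hxl | hxe
          · rw [hA1' i x hc hp1, hA1' i (x+1) hc (by omega)] at hstx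
            have e1 := hct i h1 h2 x
            have e2 := hcstep i h1 h2 x
            have e3 : cc r (m - m') K i x ≤ cc r (m - m') K i (x+1) := cc_mono (Nat.le_succ x)
            have e4 : cc r (m - m') K i (x+1) ≤ m - m' := cc_le
            have heq : cc r (m - m') K i (x+1) = cc r (m - m') K i x + 1 := by omega
            refine ⟨cc r (m - m') K i x + 1, by omega, by omega, ?_⟩
            have hlt : ll r K (cc r (m - m') K i x + 1) i < x + 1 :=
              (hciff i h1 h2 _ (x+1) (by omega) (by omega)).2 (by omega)
            have hnlt : ¬ ll r K (cc r (m - m') K i x + 1) i < x := by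
              intro hl
              have := (hciff i h1 h2 _ x (by omega) (by omega)).1 hl
              omega
            omega
          · exfalso
            have hvE : aa r m m' d K x i = r := by rw [hxe]; exact hvEnd i h1 h2 hc
            rcases le_or_gt (x+1) (m + r - i - m') with hp2 | hp2
            · have := (hvP2 i h1 h2 hc (x+1) (by omega) hp2).2.2.2.2
              omega
            · have h3 := hA3 i (x+1) h2 hc hp2
              omega
        · have hbar' : r + 1 ≤ aa r m m' d K x i := hbar
          have hp1 : r - i + uu r (m - m') K i < x := by
            by_contra hg
            push_neg at hg
            have := (hvP1 i h1 h2 hc x hg).2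
            omega
          obtain ⟨he, hi1, hi2, hi3, hv⟩ := hvP2 i h1 h2 hc x hp1 hxT
          refine ⟨x + i - r, hi1, hi2, ?_⟩
          have hKgt : ¬ K (x+i-r) i ≤ r := by
            intro hK
            have := (huiff i h1 h2 _ hi1 hi2).1 hK
            omega
          unfold ll
          rw [if_neg hKgt]
          omega
  · -- the invariants are the prescribed values
    intro s i hs hsM h1 h2
    exact hlval i h1 h2 s hs hsM

end Stmt2
end
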